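/- arXiv:1812.08809 — 5 statements merged into one kernel-verified Lean document; each statement's English description precedes it below -/
import Mathlib

section
/- For all integers n, m ≥ 2, the strong product digraph C_n ⊠ C_m of two directed cycles can be decomposed into two arc-disjoint strong spanning subdigraphs. -/
/-- A digraph (given by its arc relation) is strong (strongly connected). -/
def IsStrong {V : Type*} (A : V → V → Prop) : Prop :=
  ∀ x y : V, Relation.ReflTransGen A x y

/-- `A` has a pair of arc-disjoint strong spanning subdigraphs (a good decomposition). -/
def GoodDecomp {V : Type*} (A : V → V → Prop) : Prop :=
  ∃ A₁ A₂ : V → V → Prop,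
    (∀ x y, A₁ x y → A x y) ∧ (∀ x y, A₂ x y → A x y) ∧
    (∀ x y, ¬ (A₁ x y ∧ A₂ x y)) ∧ IsStrong A₁ ∧ IsStrong A₂

/-- Arc relation of the composition `T[H_1, ..., H_t]`. -/
def CompArc {t : ℕ} {Vt : Fin t → Type*} (T : Fin t → Fin t → Prop)
    (H : ∀ i, Vt i → Vt i → Prop) : (Σ i, Vt i) → (Σ i, Vt i) → Prop :=
  fun a b => T a.1 b.1 ∨ ∃ h : a.1 = b.1, H b.1 (h ▸ a.2) b.2


/-- The cyclic successor on `Fin n`. -/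
def finSucc {n : ℕ} (x : Fin n) : Fin n := ⟨(x.val + 1) % n, Nat.mod_lt _ x.pos⟩

def Semicomplete {V : Type*} (A : V → V → Prop) : Prop :=
  ∀ x y : V, x ≠ y → A x y ∨ A y x

/-- `A` is 2-arc-strong: it stays strong after deleting any set of at most one arc. -/
def TwoArcStrong {V : Type*} (A : V → V → Prop) : Prop :=
  ∀ X : Set (V × V), X.Subsingleton → IsStrong (fun x y => A x y ∧ (x, y) ∉ X)

/-- Digraph isomorphism. -/
def DIso {V W : Type*} (A : V → V → Prop) (B : W → W → Prop) : Prop :=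
  ∃ e : V ≃ W, ∀ x y, A x y ↔ B (e x) (e y)

/-- Arc relation of the directed cycle on `n` vertices. -/
def CycleArc (n : ℕ) : Fin n → Fin n → Prop := fun x y => y = finSucc x

/-- `T` (on `Fin t`) has a Hamiltonian cycle. -/
def HasHamCycle {t : ℕ} (T : Fin t → Fin t → Prop) : Prop :=
  ∃ e : Equiv.Perm (Fin t), ∀ i, T (e i) (e (finSucc i))

/-- Cartesian product of digraphs. -/
def CartProd {V W : Type*} (A : V → V → Prop) (B : W → W → Prop) :
    V × W → V × W → Prop :=
  fun p q => (A p.1 q.1 ∧ p.2 = q.2) ∨ (p.1 = q.1 ∧ B p.2 q.2)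

/-- Strong product of digraphs. -/
def StrongProd {V W : Type*} (A : V → V → Prop) (B : W → W → Prop) :
    V × W → V × W → Prop :=
  fun p q => (A p.1 q.1 ∧ p.2 = q.2) ∨ (p.1 = q.1 ∧ B p.2 q.2) ∨ (A p.1 q.1 ∧ B p.2 q.2)

/-- Lexicographic product of digraphs. -/
def LexProd {V W : Type*} (A : V → V → Prop) (B : W → W → Prop) :
    V × W → V × W → Prop :=
  fun p q => A p.1 q.1 ∨ (p.1 = q.1 ∧ B p.2 q.2)

/-- `k`-th Cartesian power of a digraph. -/
def CartPow {V : Type*} (A : V → V → Prop) (k : ℕ) :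
    (Fin k → V) → (Fin k → V) → Prop :=
  fun f g => ∃ i, A (f i) (g i) ∧ ∀ j, j ≠ i → f j = g j

/-- `A` has a collection of pairwise arc-disjoint directed cycles covering all vertices. -/
def HasCycleCover {V : Type*} (A : V → V → Prop) : Prop :=
  ∃ (k : ℕ) (m : Fin k → ℕ) (c : ∀ i : Fin k, Fin (m i) → V),
    (∀ i, 2 ≤ m i) ∧ (∀ i, Function.Injective (c i)) ∧
    (∀ i x, A (c i x) (c i (finSucc x))) ∧
    (∀ i j x y, c i x = c j y → c i (finSucc x) = c j (finSucc y) → i = j) ∧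
    (∀ v : V, ∃ i x, c i x = v)

/-- The digraph `C3[K2bar, K2bar, K2bar]`. -/
def Exc1 : Fin 3 × Fin 2 → Fin 3 × Fin 2 → Prop := fun p q => q.1 = finSucc p.1

/-- The digraph `C3[P2, K2bar, K2bar]`, the single arc of `P2` being `(0,0) → (0,1)`. -/
def Exc2 : Fin 3 × Fin 2 → Fin 3 × Fin 2 → Prop :=
  fun p q => q.1 = finSucc p.1 ∨ (p.1 = 0 ∧ q.1 = 0 ∧ p.2 = 0 ∧ q.2 = 1)

/-- Block index for `C3[K2bar, K2bar, K3bar]`. -/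
def blk : (Fin 2 ⊕ Fin 2 ⊕ Fin 3) → Fin 3 :=
  Sum.elim (fun _ => 0) (Sum.elim (fun _ => 1) (fun _ => 2))

/-- The digraph `C3[K2bar, K2bar, K3bar]`. -/
def Exc3 : (Fin 2 ⊕ Fin 2 ⊕ Fin 3) → (Fin 2 ⊕ Fin 2 ⊕ Fin 3) → Prop :=
  fun p q => blk q = finSucc (blk p)

/-- `S4`: the complete digraph on 4 vertices minus the directed 4-cycle `x → x+1`. -/
def S4Arc : Fin 4 → Fin 4 → Prop := fun x y => x ≠ y ∧ y ≠ finSucc x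


lemma finSucc_ne {n : ℕ} (hn : 2 ≤ n) (x : Fin n) : finSucc x ≠ x := by
  intro h
  have h' : (x.val + 1) % n = x.val := congrArg Fin.val h
  rcases Nat.lt_or_ge (x.val + 1) n with h2 | h2
  · rw [Nat.mod_eq_of_lt h2] at h'; omega
  · have hx : x.val + 1 = n := by have := x.isLt; omega
    rw [hx, Nat.mod_self] at h'
    omega

lemma reachOf {V : Type*} (R : V → V → Prop) {n : ℕ} (f : Fin n → V)
    (hf : ∀ x, R (f x) (f (finSucc x))) (x y : Fin n) :
    Relation.ReflTransGen R (f x) (f y) := by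
  have key : ∀ d : ℕ,
      Relation.ReflTransGen R (f x) (f ⟨(x.val + d) % n, Nat.mod_lt _ x.pos⟩) := by
    intro d
    induction d with
    | zero =>
        have : (⟨(x.val + 0) % n, Nat.mod_lt _ x.pos⟩ : Fin n) = x := by
          apply Fin.ext; simp [Nat.mod_eq_of_lt x.isLt]
        rw [this]
    | succ d ih =>
        refine ih.tail ?_
        have : (⟨(x.val + (d + 1)) % n, Nat.mod_lt _ x.pos⟩ : Fin n)
            = finSucc ⟨(x.val + d) % n, Nat.mod_lt _ x.pos⟩ := by
          apply Fin.ext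
          simp only [finSucc, Nat.mod_add_mod]
          rw [Nat.add_assoc]
        rw [this]; exact hf _
  have hy : (⟨(x.val + (y.val + (n - x.val))) % n, Nat.mod_lt _ x.pos⟩ : Fin n) = y := by
    apply Fin.ext
    show (x.val + (y.val + (n - x.val))) % n = y.val
    have hx : x.val + (y.val + (n - x.val)) = y.val + n := by
      have := x.isLt; omega
    rw [hx, Nat.add_mod_right, Nat.mod_eq_of_lt y.isLt]
  have := key (y.val + (n - x.val))
  rwa [hy] at this

lemma addk_surj {m : ℕ} (hm : 0 < m) (k : ℕ) (y' : Fin m) :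
    ∃ y : Fin m, (⟨(y.val + k) % m, Nat.mod_lt _ hm⟩ : Fin m) = y' := by
  have hinj : Function.Injective
      (fun y : Fin m => (⟨(y.val + k) % m, Nat.mod_lt _ hm⟩ : Fin m)) := by
    intro a b h
    have h' : (a.val + k) % m = (b.val + k) % m := congrArg Fin.val h
    have hmod : a.val ≡ b.val [MOD m] := Nat.ModEq.add_right_cancel' k h'
    apply Fin.ext
    rwa [Nat.ModEq, Nat.mod_eq_of_lt a.isLt, Nat.mod_eq_of_lt b.isLt] at hmod
  exact (Finite.injective_iff_surjective.mp hinj) y'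

lemma diagReach {n m : ℕ} (hn : 0 < n) (hm : 0 < m)
    {R : Fin n × Fin m → Fin n × Fin m → Prop}
    (hR : ∀ p, R p (finSucc p.1, finSucc p.2)) (p : Fin n × Fin m) (k : ℕ) :
    Relation.ReflTransGen R p
      (⟨(p.1.val + k) % n, Nat.mod_lt _ hn⟩, ⟨(p.2.val + k) % m, Nat.mod_lt _ hm⟩) := by
  induction k with
  | zero =>
      have : ((⟨(p.1.val + 0) % n, Nat.mod_lt _ hn⟩ : Fin n),
          (⟨(p.2.val + 0) % m, Nat.mod_lt _ hm⟩ : Fin m)) = p := by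
        ext <;> simp [Nat.mod_eq_of_lt p.1.isLt, Nat.mod_eq_of_lt p.2.isLt]
      rw [this]
  | succ k ih =>
      refine ih.tail ?_
      have h1 : (⟨(p.1.val + (k + 1)) % n, Nat.mod_lt _ hn⟩ : Fin n)
          = finSucc ⟨(p.1.val + k) % n, Nat.mod_lt _ hn⟩ := by
        apply Fin.ext
        simp only [finSucc, Nat.mod_add_mod]
        rw [Nat.add_assoc]
      have h2 : (⟨(p.2.val + (k + 1)) % m, Nat.mod_lt _ hm⟩ : Fin m)
          = finSucc ⟨(p.2.val + k) % m, Nat.mod_lt _ hm⟩ := by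
        apply Fin.ext
        simp only [finSucc, Nat.mod_add_mod]
        rw [Nat.add_assoc]
      rw [h1, h2]
      exact hR _


theorem stmt_13 (n m : ℕ) (hn : 2 ≤ n) (hm : 2 ≤ m) :
    GoodDecomp (StrongProd (CycleArc n) (CycleArc m)) := by
  have hn0 : 0 < n := by omega
  have hm0 : 0 < m := by omega
  set A₁ : Fin n × Fin m → Fin n × Fin m → Prop :=
    fun p q => (q.1 = finSucc p.1 ∧ q.2 = p.2) ∨
      (p.1 = q.1 ∧ q.2 = finSucc p.2 ∧ p.1.val ≠ 0) with hA₁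
  set A₂ : Fin n × Fin m → Fin n × Fin m → Prop :=
    fun p q => (q.1 = finSucc p.1 ∧ q.2 = finSucc p.2) ∨
      (p.1 = q.1 ∧ q.2 = finSucc p.2 ∧ p.1.val = 0) with hA₂
  refine ⟨A₁, A₂, ?_, ?_, ?_, ?_, ?_⟩
  · rintro p q (⟨h1, h2⟩ | ⟨h1, h2, h3⟩)
    · exact Or.inl ⟨h1, h2.symm⟩
    · exact Or.inr (Or.inl ⟨h1, h2⟩)
  · rintro p q (⟨h1, h2⟩ | ⟨h1, h2, h3⟩)
    · exact Or.inr (Or.inr ⟨h1, h2⟩)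
    · exact Or.inr (Or.inl ⟨h1, h2⟩)
  · rintro p q ⟨(⟨h1, h2⟩ | ⟨h1, h2, h3⟩), (⟨g1, g2⟩ | ⟨g1, g2, g3⟩)⟩
    · rw [h2] at g2; exact finSucc_ne hm p.2 g2.symm
    · rw [← g1] at h1; exact finSucc_ne hn p.1 h1.symm
    · rw [← h1] at g1; exact finSucc_ne hn p.1 g1.symm
    · exact h3 g3
  · -- A₁ strong
    intro p q
    have hH : ∀ (b : Fin m) (x : Fin n), A₁ (x, b) (finSucc x, b) :=
      fun b x => Or.inl ⟨rfl, rfl⟩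
    have o : Fin n := ⟨1, by omega⟩
    have hV : ∀ y : Fin m, A₁ ((⟨1, by omega⟩ : Fin n), y) (⟨1, by omega⟩, finSucc y) :=
      fun y => Or.inr ⟨rfl, rfl, by simp⟩
    have s1 : Relation.ReflTransGen A₁ (p.1, p.2) ((⟨1, by omega⟩ : Fin n), p.2) :=
      reachOf A₁ (fun x => (x, p.2)) (fun x => hH p.2 x) p.1 ⟨1, by omega⟩
    have s2 : Relation.ReflTransGen A₁ ((⟨1, by omega⟩ : Fin n), p.2)
        ((⟨1, by omega⟩ : Fin n), q.2) :=
      reachOf A₁ (fun y => ((⟨1, by omega⟩ : Fin n), y)) hV p.2 q.2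
    have s3 : Relation.ReflTransGen A₁ ((⟨1, by omega⟩ : Fin n), q.2) (q.1, q.2) :=
      reachOf A₁ (fun x => (x, q.2)) (fun x => hH q.2 x) ⟨1, by omega⟩ q.1
    exact (s1.trans s2).trans s3
  · -- A₂ strong
    intro p q
    have hD : ∀ p : Fin n × Fin m, A₂ p (finSucc p.1, finSucc p.2) :=
      fun p => Or.inl ⟨rfl, rfl⟩
    have hV : ∀ y : Fin m, A₂ ((⟨0, hn0⟩ : Fin n), y) (⟨0, hn0⟩, finSucc y) :=
      fun y => Or.inr ⟨rfl, rfl, rfl⟩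
    -- step 1: reach column 0
    have s1 := diagReach hn0 hm0 hD p (n - p.1.val)
    have e1 : (⟨(p.1.val + (n - p.1.val)) % n, Nat.mod_lt _ hn0⟩ : Fin n) = ⟨0, hn0⟩ := by
      apply Fin.ext
      show (p.1.val + (n - p.1.val)) % n = 0
      have : p.1.val + (n - p.1.val) = n := by have := p.1.isLt; omega
      rw [this, Nat.mod_self]
    rw [e1] at s1
    -- step 2: pick the right row
    obtain ⟨y₂, hy₂⟩ := addk_surj hm0 q.1.val q.2
    have s2 : Relation.ReflTransGen A₂
        ((⟨0, hn0⟩ : Fin n), (⟨(p.2.val + (n - p.1.val)) % m, Nat.mod_lt _ hm0⟩ : Fin m))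
        ((⟨0, hn0⟩ : Fin n), y₂) :=
      reachOf A₂ (fun y => ((⟨0, hn0⟩ : Fin n), y)) hV _ y₂
    -- step 3: diagonal to target
    have s3 := diagReach hn0 hm0 hD ((⟨0, hn0⟩ : Fin n), y₂) q.1.val
    have e3 : (⟨(((⟨0, hn0⟩ : Fin n)).val + q.1.val) % n, Nat.mod_lt _ hn0⟩ : Fin n) = q.1 := by
      apply Fin.ext
      simp [Nat.mod_eq_of_lt q.1.isLt]
    rw [e3, hy₂] at s3
    exact (s1.trans s2).trans s3
end

section
/- For any strong digraphs G and H, each with at least 2 vertices, the strong product digraph G ⊠ H can be decomposed into two arc-disjoint strong spanning subdigraphs. -/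
section Aux

variable {V W : Type*} (G : V → V → Prop) (H : W → W → Prop) (x₀ : V) (w₀ w₁ : W)

/-- First strong spanning subdigraph. -/
def Rel1 : V × W → V × W → Prop := fun p q =>
  (G p.1 q.1 ∧ p.2 = q.2) ∨
  (G p.1 q.1 ∧ H p.2 q.2 ∧ ¬(p.2 = w₀ ∧ q.2 = w₁)) ∨
  (p = (x₀, w₀) ∧ q = (x₀, w₁))

/-- Second strong spanning subdigraph. -/
def Rel2 : V × W → V × W → Prop := fun p q =>
  (p.1 = q.1 ∧ H p.2 q.2 ∧ ¬(p = (x₀, w₀) ∧ q = (x₀, w₁))) ∨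
  (G p.1 q.1 ∧ p.2 = w₀ ∧ q.2 = w₁)

variable {G H x₀ w₀ w₁}

lemma aux_toW0 {y : W} (h : Relation.ReflTransGen H y w₀) :
    ∀ x : V, Relation.ReflTransGen (Rel2 G H x₀ w₀ w₁) (x, y) (x, w₀) := by
  induction h using Relation.ReflTransGen.head_induction_on with
  | refl => intro x; exact .refl
  | @head a c hyz htail ih =>
      intro x
      by_cases h0 : a = w₀
      · rw [h0]
      · refine .head (show Rel2 G H x₀ w₀ w₁ (x, a) (x, c) from
          Or.inl ⟨rfl, hyz, fun hc => h0 ?_⟩) (ih x)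
        exact congrArg Prod.snd hc.1

lemma aux_stepX (hHs : IsStrong H) {x x' : V} (hxx' : G x x') (y : W) :
    Relation.ReflTransGen (Rel2 G H x₀ w₀ w₁) (x, y) (x', w₁) :=
  (aux_toW0 (hHs y w₀) x).tail (Or.inr ⟨hxx', rfl, rfl⟩)

lemma aux_reachW1 (hHs : IsStrong H) {x x' : V} (h : Relation.TransGen G x x') :
    ∀ y : W, Relation.ReflTransGen (Rel2 G H x₀ w₀ w₁) (x, y) (x', w₁) := by
  induction h using Relation.TransGen.head_induction_on with
  | single hab => intro y; exact aux_stepX hHs hab y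
  | head hab htail ih => intro y; exact (aux_stepX hHs hab y).trans (ih w₁)

lemma aux_fiber2 (hHs : IsStrong H) (Gt : ∀ a b : V, Relation.TransGen G a b)
    {y y' : W} (h : Relation.ReflTransGen H y y') :
    ∀ x : V, Relation.ReflTransGen (Rel2 G H x₀ w₀ w₁) (x, y) (x, y') := by
  induction h using Relation.ReflTransGen.head_induction_on with
  | refl => intro x; exact .refl
  | @head a c hac htail ih =>
      intro x
      by_cases hforb : x = x₀ ∧ a = w₀ ∧ c = w₁
      · rw [hforb.1, hforb.2.1]
        refine (aux_reachW1 hHs (Gt x₀ x₀) w₀).trans ?_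
        have h5 := ih x
        rw [hforb.1, hforb.2.2] at h5
        exact h5
      · refine .head (show Rel2 G H x₀ w₀ w₁ (x, a) (x, c) from
          Or.inl ⟨rfl, hac, fun hc => hforb ?_⟩) (ih x)
        exact ⟨congrArg Prod.fst hc.1, congrArg Prod.snd hc.1, congrArg Prod.snd hc.2⟩

lemma aux_horiz {x x' : V} (h : Relation.ReflTransGen G x x') (y : W) :
    Relation.ReflTransGen (Rel1 G H x₀ w₀ w₁) (x, y) (x', y) := by
  induction h with
  | refl => exact .refl
  | tail hab hbc ih => exact ih.tail (Or.inl ⟨hbc, rfl⟩)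

lemma aux_stepY (hGs : IsStrong G) (outG : ∀ x : V, ∃ x', G x x')
    {y y' : W} (hyy' : H y y') (x : V) :
    Relation.ReflTransGen (Rel1 G H x₀ w₀ w₁) (x, y) (x, y') := by
  by_cases hforb : y = w₀ ∧ y' = w₁
  · rw [hforb.1, hforb.2]
    exact ((aux_horiz (hGs x x₀) w₀).tail
      (Or.inr (Or.inr ⟨rfl, rfl⟩))).trans (aux_horiz (hGs x₀ x) w₁)
  · obtain ⟨x'', hx''⟩ := outG x
    refine (Relation.ReflTransGen.single ?_).trans (aux_horiz (hGs x'' x) y')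
    exact (Or.inr (Or.inl ⟨hx'', hyy', hforb⟩) :
      Rel1 G H x₀ w₀ w₁ (x, y) (x'', y'))

lemma aux_fiber1 (hGs : IsStrong G) (outG : ∀ x : V, ∃ x', G x x')
    {y y' : W} (h : Relation.ReflTransGen H y y') (x : V) :
    Relation.ReflTransGen (Rel1 G H x₀ w₀ w₁) (x, y) (x, y') := by
  induction h using Relation.ReflTransGen.head_induction_on with
  | refl => exact .refl
  | head hac htail ih => exact (aux_stepY hGs outG hac x).trans ih

end Aux

theorem stmt_14 {V W : Type*} [Fintype V] [Fintype W] [Nontrivial V] [Nontrivial W]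
    (G : V → V → Prop) (H : W → W → Prop)
    (hG : Irreflexive G) (hH : Irreflexive H)
    (hGs : IsStrong G) (hHs : IsStrong H) :
    GoodDecomp (StrongProd G H) := by
  classical
  obtain ⟨x₀, v2, hv12⟩ := exists_pair_ne V
  have outG : ∀ x : V, ∃ x', G x x' := by
    intro x
    obtain ⟨x', hx'⟩ := exists_ne x
    rcases (hGs x x').cases_head with h | ⟨z, hz, _⟩
    · exact absurd h.symm hx'
    · exact ⟨z, hz⟩
  have outH : ∀ y : W, ∃ y', H y y' := by
    intro y
    obtain ⟨y', hy'⟩ := exists_ne y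
    rcases (hHs y y').cases_head with h | ⟨z, hz, _⟩
    · exact absurd h.symm hy'
    · exact ⟨z, hz⟩
  obtain ⟨w₀, _⟩ := exists_pair_ne W
  obtain ⟨w₁, hw⟩ := outH w₀
  have hw01 : w₀ ≠ w₁ := fun h => hH w₀ (h ▸ hw)
  have Gt : ∀ x x' : V, Relation.TransGen G x x' := by
    have key : ∀ a b : V, a ≠ b → Relation.TransGen G a b := by
      intro a b hab
      rcases Relation.reflTransGen_iff_eq_or_transGen.mp (hGs a b) with h | h
      · exact absurd h.symm hab
      · exact h
    intro x x'
    by_cases hxx : x = x'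
    · subst hxx
      obtain ⟨z, hz⟩ := outG x
      have hzx : z ≠ x := fun h => hG x (h ▸ hz)
      exact (Relation.TransGen.single hz).trans (key z x hzx)
    · exact key x x' hxx
  refine ⟨Rel1 G H x₀ w₀ w₁, Rel2 G H x₀ w₀ w₁, ?_, ?_, ?_, ?_, ?_⟩
  · rintro ⟨x, y⟩ ⟨x', y'⟩ h
    dsimp only [Rel1, StrongProd]
    dsimp only [Rel1] at h
    rcases h with ⟨h1, h2⟩ | ⟨h1, h2, _⟩ | ⟨h1, h2⟩
    · exact Or.inl ⟨h1, h2⟩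
    · exact Or.inr (Or.inr ⟨h1, h2⟩)
    · rw [Prod.mk.injEq] at h1 h2
      refine Or.inr (Or.inl ⟨h1.1.trans h2.1.symm, ?_⟩)
      rw [h1.2, h2.2]; exact hw
  · rintro ⟨x, y⟩ ⟨x', y'⟩ h
    dsimp only [Rel2, StrongProd]
    dsimp only [Rel2] at h
    rcases h with ⟨h1, h2, _⟩ | ⟨h1, h2, h3⟩
    · exact Or.inr (Or.inl ⟨h1, h2⟩)
    · refine Or.inr (Or.inr ⟨h1, ?_⟩)
      rw [h2, h3]; exact hw
  · rintro ⟨x, y⟩ ⟨x', y'⟩ ⟨h, g⟩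
    dsimp only [Rel1, Rel2] at h g
    rcases h with ⟨h1, h2⟩ | ⟨h1, h2, h3⟩ | ⟨h1, h2⟩ <;>
      rcases g with ⟨g1, g2, g3⟩ | ⟨g1, g2, g3⟩
    · rw [g1] at h1; exact hG x' h1
    · exact hw01 ((g2.symm.trans h2).trans g3)
    · rw [g1] at h1; exact hG x' h1
    · exact h3 ⟨g2, g3⟩
    · exact g3 ⟨h1, h2⟩
    · rw [Prod.mk.injEq] at h1 h2
      rw [h1.1, h2.1] at g1; exact hG x₀ g1
  · rintro ⟨x, y⟩ ⟨x', y'⟩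
    exact (aux_horiz (hGs x x') y).trans (aux_fiber1 hGs outG (hHs y y') x')
  · rintro ⟨x, y⟩ ⟨x', y'⟩
    exact (aux_reachW1 hHs (Gt x x') y).trans (aux_fiber2 hHs Gt (hHs w₁ y') x')
end

section
/- For any strong digraphs G and H, each with at least 2 vertices, the lexicographic product digraph G ∘ H can be decomposed into two arc-disjoint strong spanning subdigraphs. -/
theorem stmt_15 {V W : Type*} [Fintype V] [Fintype W] [Nontrivial V] [Nontrivial W]
    (G : V → V → Prop) (H : W → W → Prop)
    (hG : Irreflexive G) (hH : Irreflexive H)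
    (hGs : IsStrong G) (hHs : IsStrong H) :
    GoodDecomp (LexProd G H) := by
  classical
  obtain ⟨x₀, s, hs0⟩ := exists_pair_ne V
  have hs : s ≠ x₀ := hs0.symm
  set A₁ : V × W → V × W → Prop :=
    fun p q => (G p.1 q.1 ∧ p.2 = q.2) ∨ (p.1 = x₀ ∧ q.1 = x₀ ∧ H p.2 q.2) with hA1
  set A₂ : V × W → V × W → Prop :=
    fun p q => (G p.1 q.1 ∧ p.2 ≠ q.2) ∨ (p.1 = q.1 ∧ p.1 ≠ x₀ ∧ H p.2 q.2) with hA2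
  have hTG : ∀ x y : V, x ≠ y → Relation.TransGen G x y := by
    intro x y hxy
    rcases Relation.reflTransGen_iff_eq_or_transGen.mp (hGs x y) with h | h
    · exact absurd h.symm hxy
    · exact h
  -- forward transport in A₂ with free final coordinate
  have D : ∀ {x y : V}, Relation.TransGen G x y → ∀ p : W,
      ∃ c, Relation.ReflTransGen A₂ (x, p) (y, c) := by
    intro x y h
    induction h with
    | single h =>
      intro p
      obtain ⟨c, hc⟩ := exists_ne p
      exact ⟨c, Relation.ReflTransGen.single (Or.inl ⟨h, fun e => hc e.symm⟩)⟩
    | tail hwalk harc ih =>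
      intro p
      obtain ⟨c, hc⟩ := ih p
      obtain ⟨c', hc'⟩ := exists_ne c
      exact ⟨c', hc.tail (Or.inl ⟨harc, Ne.symm hc'⟩)⟩
  -- backward transport in A₂ with free initial coordinate
  have E : ∀ {x y : V}, Relation.TransGen G x y → ∀ q : W,
      ∃ c, Relation.ReflTransGen A₂ (x, c) (y, q) := by
    intro x y h
    induction h using Relation.TransGen.head_induction_on with
    | single h =>
      intro q
      obtain ⟨c, hc⟩ := exists_ne q
      exact ⟨c, Relation.ReflTransGen.single (Or.inl ⟨h, hc⟩)⟩
    | head harc _ ih =>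
      intro q
      obtain ⟨c₁, h₁⟩ := ih q
      obtain ⟨c, hc⟩ := exists_ne c₁
      exact ⟨c, Relation.ReflTransGen.head (Or.inl ⟨harc, hc⟩) h₁⟩
  -- movement inside a copy z ≠ x₀ for A₂
  have inCopy : ∀ z : V, z ≠ x₀ → ∀ p q : W,
      Relation.ReflTransGen A₂ (z, p) (z, q) := by
    intro z hz p q
    exact Relation.ReflTransGen.lift (fun c => (z, c))
      (fun a b h => Or.inr ⟨rfl, hz, h⟩) _ _ (hHs p q)
  refine ⟨A₁, A₂, ?_, ?_, ?_, ?_, ?_⟩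
  · rintro ⟨x, p⟩ ⟨y, q⟩ (⟨h, _⟩ | ⟨h1, h2, h3⟩)
    · exact Or.inl h
    · exact Or.inr ⟨h1.trans h2.symm, h3⟩
  · rintro ⟨x, p⟩ ⟨y, q⟩ (⟨h, _⟩ | ⟨h1, _, h3⟩)
    · exact Or.inl h
    · exact Or.inr ⟨h1, h3⟩
  · rintro ⟨x, p⟩ ⟨y, q⟩ ⟨(⟨hg, he⟩ | ⟨h1, h2, _⟩), (⟨hg', hne⟩ | ⟨he', hne', _⟩)⟩
    · exact hne he
    · exact hG _ (he' ▸ hg)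
    · exact hG _ ((h1.trans h2.symm) ▸ hg')
    · exact hne' h1
  · -- A₁ strong
    rintro ⟨x, p⟩ ⟨y, q⟩
    have t1 : Relation.ReflTransGen A₁ (x, p) (x₀, p) :=
      Relation.ReflTransGen.lift (fun z => (z, p))
        (fun a b h => Or.inl ⟨h, rfl⟩) _ _ (hGs x x₀)
    have t2 : Relation.ReflTransGen A₁ (x₀, p) (x₀, q) :=
      Relation.ReflTransGen.lift (fun c => (x₀, c))
        (fun a b h => Or.inr ⟨rfl, rfl, h⟩) _ _ (hHs p q)
    have t3 : Relation.ReflTransGen A₁ (x₀, q) (y, q) :=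
      Relation.ReflTransGen.lift (fun z => (z, q))
        (fun a b h => Or.inl ⟨h, rfl⟩) _ _ (hGs x₀ y)
    exact (t1.trans t2).trans t3
  · -- A₂ strong
    rintro ⟨x, p⟩ ⟨y, q⟩
    by_cases hy : y = x₀
    · rw [hy]
      obtain ⟨c, h1⟩ : ∃ c, Relation.ReflTransGen A₂ (x, p) (s, c) := by
        by_cases hxs : x = s
        · exact ⟨p, hxs ▸ Relation.ReflTransGen.refl⟩
        · exact D (hTG x s hxs) p
      obtain ⟨c', h2⟩ := E (hTG s x₀ hs) q
      exact h1.trans ((inCopy s hs c c').trans h2)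
    · by_cases hxy : x = y
      · subst hxy
        exact inCopy x hy p q
      · obtain ⟨c, h1⟩ := D (hTG x y hxy) p
        exact h1.trans (inCopy y hy c q)
end

section
/- Let G and H be strong digraphs, each of order at least 2. If H contains ℓ ≥ 1 pairwise arc-disjoint strong spanning subdigraphs, then the lexicographic product G ∘ H can be decomposed into ℓ + 1 pairwise arc-disjoint strong spanning subdigraphs. -/
lemma aux_exists_out {V : Type*} [Nontrivial V] {A : V → V → Prop}
    (h : IsStrong A) (x : V) : ∃ z, A x z := by
  obtain ⟨y, hy⟩ := exists_ne x
  rcases (h x y).cases_head with h' | ⟨c, hc, _⟩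
  · exact absurd h'.symm hy
  · exact ⟨c, hc⟩

theorem stmt_16 {V W : Type*} [Fintype V] [Fintype W] [Nontrivial V] [Nontrivial W]
    (G : V → V → Prop) (H : W → W → Prop)
    (hG : Irreflexive G) (hH : Irreflexive H)
    (hGs : IsStrong G) (hHs : IsStrong H)
    (ℓ : ℕ) (hℓ : 1 ≤ ℓ)
    (B : Fin ℓ → (W → W → Prop))
    (hBsub : ∀ i x y, B i x y → H x y)
    (hBdisj : ∀ i j, i ≠ j → ∀ x y, ¬ (B i x y ∧ B j x y))
    (hBs : ∀ i, IsStrong (B i)) :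
    ∃ C : Fin (ℓ + 1) → (V × W → V × W → Prop),
      (∀ i x y, C i x y → LexProd G H x y) ∧
      (∀ i j, i ≠ j → ∀ x y, ¬ (C i x y ∧ C j x y)) ∧
      (∀ i, IsStrong (C i)) := by
  classical
  obtain ⟨w₀⟩ : Nonempty W := inferInstance
  choose n hn using fun j : Fin ℓ => aux_exists_out (hBs j) w₀
  have hnw : ∀ j, n j ≠ w₀ := by
    intro j h
    have := hBsub j w₀ (n j) (hn j)
    rw [h] at this
    exact hH w₀ this
  have hninj : ∀ j k, n j = n k → j = k := by
    intro j k h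
    by_contra hne
    exact hBdisj j k hne w₀ (n j) ⟨hn j, h ▸ hn k⟩
  set C0 : V × W → V × W → Prop :=
    fun p q => G p.1 q.1 ∧ (p.2 = q.2 → p.2 = w₀) with hC0
  set Cs : Fin ℓ → (V × W → V × W → Prop) :=
    fun j p q => (G p.1 q.1 ∧ p.2 = n j ∧ q.2 = n j) ∨ (p.1 = q.1 ∧ B j p.2 q.2) with hCs
  -- basic arcs of C0
  have hC0from0 : ∀ (x z : V) (v : W), G x z → C0 (x, w₀) (z, v) :=
    fun x z v h => ⟨h, fun _ => rfl⟩
  have hC0to0 : ∀ (x z : V) (u : W), G x z → C0 (x, u) (z, w₀) :=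
    fun x z u h => ⟨h, fun h' => h'⟩
  have hB0 : ∀ x y : V, Relation.ReflTransGen G x y →
      Relation.ReflTransGen C0 (x, w₀) (y, w₀) := by
    intro x y h
    exact Relation.ReflTransGen.lift (p := C0) (fun v => (v, w₀))
      (fun a b hab => show C0 (a, w₀) (b, w₀) from ⟨hab, fun _ => rfl⟩) _ _ h
  have hD : ∀ (y : V) (w' : W) (x : V), Relation.ReflTransGen G x y →
      ∃ v, Relation.ReflTransGen C0 (x, v) (y, w') := by
    intro y w' x h
    induction h using Relation.ReflTransGen.head_induction_on with
    | refl => exact ⟨w', Relation.ReflTransGen.refl⟩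
    | head hxc _ ih =>
        obtain ⟨v, hv⟩ := ih
        exact ⟨w₀, Relation.ReflTransGen.head (hC0from0 _ _ _ hxc) hv⟩
  have hA : ∀ (x : V) (u : W), Relation.ReflTransGen C0 (x, u) (x, w₀) := by
    intro x u
    obtain ⟨z, hz⟩ := aux_exists_out hGs x
    exact Relation.ReflTransGen.head (hC0to0 x z u hz) (hB0 z x (hGs z x))
  have hC : ∀ (y : V) (w' : W), Relation.ReflTransGen C0 (y, w₀) (y, w') := by
    intro y w'
    obtain ⟨z, hz⟩ := aux_exists_out hGs y
    obtain ⟨v, hv⟩ := hD y w' z (hGs z y)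
    exact Relation.ReflTransGen.head (hC0from0 y z v hz) hv
  have hC0strong : IsStrong C0 := by
    rintro ⟨x, u⟩ ⟨y, u'⟩
    exact ((hA x u).trans (hB0 x y (hGs x y))).trans (hC y u')
  have hCsstrong : ∀ j, IsStrong (Cs j) := by
    intro j
    have hW : ∀ (x : V) (u u' : W), Relation.ReflTransGen (B j) u u' →
        Relation.ReflTransGen (Cs j) (x, u) (x, u') := by
      intro x u u' h
      exact Relation.ReflTransGen.lift (p := Cs j) (fun v => (x, v))
        (fun a b hab => show Cs j (x, a) (x, b) from Or.inr ⟨rfl, hab⟩) _ _ h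
    have hX : ∀ x y : V, Relation.ReflTransGen G x y →
        Relation.ReflTransGen (Cs j) (x, n j) (y, n j) := by
      intro x y h
      exact Relation.ReflTransGen.lift (p := Cs j) (fun v => (v, n j))
        (fun a b hab => show Cs j (a, n j) (b, n j) from Or.inl ⟨hab, rfl, rfl⟩) _ _ h
    rintro ⟨x, u⟩ ⟨y, u'⟩
    exact ((hW x u (n j) (hBs j u (n j))).trans (hX x y (hGs x y))).trans
      (hW y (n j) u' (hBs j (n j) u'))
  have hdis0 : ∀ (j : Fin ℓ) (x y : V × W), ¬ (C0 x y ∧ Cs j x y) := by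
    rintro j x y ⟨⟨hGxy, himp⟩, hcs⟩
    rcases hcs with ⟨_, hp, hq⟩ | ⟨heq, _⟩
    · exact hnw j (hp ▸ himp (hp.trans hq.symm))
    · exact hG x.1 (heq ▸ hGxy)
  have hdisS : ∀ (j k : Fin ℓ), j ≠ k → ∀ x y : V × W, ¬ (Cs j x y ∧ Cs k x y) := by
    rintro j k hjk x y ⟨hj, hk⟩
    rcases hj with ⟨hG1, hp, _⟩ | ⟨heq, hb⟩
    · rcases hk with ⟨_, hp', _⟩ | ⟨heq', _⟩
      · exact hjk (hninj j k (hp.symm.trans hp'))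
      · exact hG x.1 (heq' ▸ hG1)
    · rcases hk with ⟨hG2, _, _⟩ | ⟨_, hb'⟩
      · exact hG x.1 (heq ▸ hG2)
      · exact hBdisj j k hjk x.2 y.2 ⟨hb, hb'⟩
  refine ⟨Fin.cases C0 Cs, ?_, ?_, ?_⟩
  · intro i
    induction i using Fin.cases with
    | zero => intro x y h; simp only [Fin.cases_zero] at h; exact Or.inl h.1
    | succ j =>
        intro x y h
        simp only [Fin.cases_succ] at h
        rcases h with ⟨hGxy, _, _⟩ | ⟨heq, hb⟩
        · exact Or.inl hGxy
        · exact Or.inr ⟨heq, hBsub j _ _ hb⟩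
  · intro i j hij
    induction i using Fin.cases with
    | zero =>
        induction j using Fin.cases with
        | zero => exact absurd rfl hij
        | succ k => simpa using hdis0 k
    | succ j' =>
        induction j using Fin.cases with
        | zero =>
            intro x y h
            simp only [Fin.cases_zero, Fin.cases_succ] at h
            exact hdis0 j' x y ⟨h.2, h.1⟩
        | succ k =>
            have hjk : j' ≠ k := fun h => hij (congrArg Fin.succ h)
            simpa using hdisS j' k hjk
  · intro i
    induction i using Fin.cases with
    | zero => simpa using hC0strong
    | succ j => simpa using hCsstrong j
end

section
/- The digraph S4, obtained from the complete digraph on 4 vertices by deleting the arcs of a directed cycle of length 4, does not have a pair of arc-disjoint strong spanning subdigraphs. -/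
/-- Reachable vertices stay in a set closed under the arc relation. -/
lemma reach_mem {V : Type*} {R : V → V → Prop} {S : Set V}
    (hS : ∀ a b, R a b → a ∈ S → b ∈ S) {x y : V}
    (h : Relation.ReflTransGen R x y) (hx : x ∈ S) : y ∈ S := by
  induction h with
  | refl => exact hx
  | tail _ hab ih => exact hS _ _ hab ih

lemma two_choices : ∀ x y : Fin 4, x ≠ y → y ≠ finSucc x → y = x + 2 ∨ y = x + 3 := by
  decide

lemma ne_succ : ∀ x : Fin 4, x ≠ finSucc x := by decide

set_option maxRecDepth 10000 in
lemma key : ∀ g : Fin 4 → Fin 4, (∀ i, g i = i + 2 ∨ g i = i + 3) →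
    (∃ i, g i = i + 2) →
    ∃ x y : Fin 4,
      (y ≠ x ∧ y ≠ g x ∧ y ≠ g (g x) ∧ y ≠ g (g (g x))) ∧
      (g (g (g (g x))) = x ∨ g (g (g (g x))) = g x ∨
        g (g (g (g x))) = g (g x) ∨ g (g (g (g x))) = g (g (g x))) := by
  decide

lemma main_aux {A : Fin 4 → Fin 4 → Prop} {f : Fin 4 → Fin 4}
    (hAf : ∀ x y, A x y → y = f x)
    (hg : ∀ i, f i = i + 2 ∨ f i = i + 3)
    (h2 : ∃ i, f i = i + 2) : ¬ IsStrong A := by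
  obtain ⟨x, y, ⟨hy0, hy1, hy2, hy3⟩, hcl⟩ := key f hg h2
  intro hs
  have hmem : y ∈ {a : Fin 4 | a = x ∨ a = f x ∨ a = f (f x) ∨ a = f (f (f x))} := by
    refine reach_mem (S := {a : Fin 4 | a = x ∨ a = f x ∨ a = f (f x) ∨ a = f (f (f x))})
      ?_ (hs x y) (Or.inl rfl)
    rintro a b hab ha
    obtain rfl := hAf a b hab
    simp only [Set.mem_setOf_eq] at ha ⊢
    rcases ha with rfl | rfl | rfl | rfl
    · tauto
    · tauto
    · tauto
    · exact hcl
  rcases hmem with h | h | h | h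
  · exact hy0 h
  · exact hy1 h
  · exact hy2 h
  · exact hy3 h

theorem stmt_18 : ¬ GoodDecomp S4Arc := by
  rintro ⟨A₁, A₂, h1, h2, hdisj, hs1, hs2⟩
  have hout1 : ∀ x : Fin 4, ∃ z, A₁ x z := by
    intro x
    rcases (Relation.ReflTransGen.cases_head (hs1 x (finSucc x))) with h | ⟨c, hc, _⟩
    · exact absurd h (ne_succ x)
    · exact ⟨c, hc⟩
  have hout2 : ∀ x : Fin 4, ∃ z, A₂ x z := by
    intro x
    rcases (Relation.ReflTransGen.cases_head (hs2 x (finSucc x))) with h | ⟨c, hc, _⟩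
    · exact absurd h (ne_succ x)
    · exact ⟨c, hc⟩
  choose f₁ hf₁ using hout1
  choose f₂ hf₂ using hout2
  -- each arc target lies in {x+2, x+3}
  have ht1 : ∀ x y, A₁ x y → y = x + 2 ∨ y = x + 3 := fun x y h =>
    two_choices x y (h1 x y h).1 (h1 x y h).2
  have ht2 : ∀ x y, A₂ x y → y = x + 2 ∨ y = x + 3 := fun x y h =>
    two_choices x y (h2 x y h).1 (h2 x y h).2
  have hg1 : ∀ i, f₁ i = i + 2 ∨ f₁ i = i + 3 := fun i => ht1 i _ (hf₁ i)
  have hg2 : ∀ i, f₂ i = i + 2 ∨ f₂ i = i + 3 := fun i => ht2 i _ (hf₂ i)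
  have hne : ∀ x, f₁ x ≠ f₂ x := by
    intro x h
    exact hdisj x (f₂ x) ⟨h ▸ hf₁ x, hf₂ x⟩
  -- A₁ is functional: any arc from x goes to f₁ x
  have hfun1 : ∀ x y, A₁ x y → y = f₁ x := by
    intro x y hxy
    by_contra hne'
    -- then A₁ contains both x+2 and x+3 arcs out of x, so A₂ x (f₂ x) clashes
    have hboth : ∀ z, z = x + 2 ∨ z = x + 3 → A₁ x z := by
      intro z hz
      rcases ht1 x y hxy with hy | hy <;> rcases hg1 x with hf | hf <;>
        rcases hz with rfl | rfl <;> first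
          | exact hy ▸ hxy
          | exact hf ▸ hf₁ x
          | (exact absurd (hy.trans hf.symm) hne')
          | (exact absurd (hy.trans hf.symm) hne')
    exact hdisj x (f₂ x) ⟨hboth _ (hg2 x), hf₂ x⟩
  have hfun2 : ∀ x y, A₂ x y → y = f₂ x := by
    intro x y hxy
    by_contra hne'
    have hboth : ∀ z, z = x + 2 ∨ z = x + 3 → A₂ x z := by
      intro z hz
      rcases ht2 x y hxy with hy | hy <;> rcases hg2 x with hf | hf <;>
        rcases hz with rfl | rfl <;> first
          | exact hy ▸ hxy
          | exact hf ▸ hf₂ x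
          | (exact absurd (hy.trans hf.symm) hne')
          | (exact absurd (hy.trans hf.symm) hne')
    exact hdisj x (f₁ x) ⟨hf₁ x, hboth _ (hg1 x)⟩
  -- one of f₁ 0, f₂ 0 equals 0 + 2
  have h02 : f₁ 0 = (0 : Fin 4) + 2 ∨ f₂ 0 = (0 : Fin 4) + 2 := by
    rcases hg1 0 with h | h
    · exact Or.inl h
    · rcases hg2 0 with h' | h'
      · exact Or.inr h'
      · exact absurd (h.trans h'.symm) (hne 0)
  rcases h02 with h | h
  · exact main_aux hfun1 hg1 ⟨0, h⟩ hs1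
  · exact main_aux hfun2 hg2 ⟨0, h⟩ hs2
end
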